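/- Assume the probability measure pr is exchangeable (invariant under permutations of individuals). Then for any individual a ∈ U and 1 ≤ k ≤ N: pr(H | Exact(k,U,F) ∧ F_a ∧ G_a) = pr(H | F_1 ∧ ... ∧ F_k ∧ ¬F_{k+1} ∧ ... ∧ ¬F_N ∧ G_k). -/

import Mathlib

open MeasureTheory ProbabilityTheory

/-- Complete description vectors: each individual is assigned whether it is `F`
(first component) and whether it is `G` (second component). -/
abbrev CDV (N : ℕ) := Fin N → Bool × Bool

/-- The event that individual `b` satisfies `F`. -/
def Fev {N : ℕ} (b : Fin N) : Set (CDV N) := {ω | (ω b).1 = true}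

/-- The event that individual `b` satisfies `G`. -/
def Gev {N : ℕ} (b : Fin N) : Set (CDV N) := {ω | (ω b).2 = true}

/-- The hypothesis `H`: every individual satisfying `F` also satisfies `G`. -/
def Hyp (N : ℕ) : Set (CDV N) := {ω | ∀ b : Fin N, (ω b).1 = true → (ω b).2 = true}


open MeasureTheory ProbabilityTheory

/-- The event `Z_{(C,F)}`: exactly the individuals in `C` satisfy `F`. -/
def Zev {N : ℕ} (C : Finset (Fin N)) : Set (CDV N) :=
  {ω | ∀ b : Fin N, ((ω b).1 = true ↔ b ∈ C)}

/-- The event `Exact(k, U, F)`: exactly `k` individuals of the universe satisfy `F`. -/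
def ExactEv (N k : ℕ) : Set (CDV N) :=
  ⋃ C ∈ Finset.univ.powersetCard k, Zev (N := N) C

/-- Substitution of a permutation `π` into propositions, replacing each individual `b`
by `π b`: `ρ^π = permCDV π ⁻¹' ρ`. -/
def permCDV {N : ℕ} (π : Equiv.Perm (Fin N)) : CDV N → CDV N :=
  fun ω b => ω (π b)

lemma measurable_all {N : ℕ} (s : Set (CDV N)) : MeasurableSet s :=
  (Set.toFinite s).measurableSet

/-- Existence of a permutation carrying `C` onto `T` and `a` to `i`. -/
lemma exists_perm {N : ℕ} (C T : Finset (Fin N)) (hcard : C.card = T.card)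
    (a : Fin N) (ha : a ∈ C) (i : Fin N) (hiT : i ∈ T) :
    ∃ π : Equiv.Perm (Fin N), (∀ x, x ∈ C ↔ π x ∈ T) ∧ π a = i := by
  classical
  have hccard : Cᶜ.card = Tᶜ.card := by
    simp [Finset.card_compl, hcard]
  let e : {x // x ∈ C} ≃ {x // x ∈ T} := Finset.equivOfCardEq hcard
  let f0 : {x // x ∈ Cᶜ} ≃ {x // x ∈ Tᶜ} := Finset.equivOfCardEq hccard
  let f : {x // ¬ x ∈ C} ≃ {x // ¬ x ∈ T} :=
    ((Equiv.subtypeEquivRight (fun x => by simp)).trans f0).trans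
      (Equiv.subtypeEquivRight (fun x => by simp))
  let σ : Equiv.Perm (Fin N) :=
    ((Equiv.sumCompl (· ∈ C)).symm.trans (e.sumCongr f)).trans (Equiv.sumCompl (· ∈ T))
  have hσ : ∀ x, x ∈ C ↔ σ x ∈ T := by
    intro x
    by_cases hx : x ∈ C
    · simp only [σ, Equiv.trans_apply, Equiv.sumCompl_symm_apply_of_pos hx,
        Equiv.sumCongr_apply, Sum.map_inl, Equiv.sumCompl_apply_inl]
      exact ⟨fun _ => (e ⟨x, hx⟩).2, fun _ => hx⟩
    · simp only [σ, Equiv.trans_apply, Equiv.sumCompl_symm_apply_of_neg hx,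
        Equiv.sumCongr_apply, Sum.map_inr, Equiv.sumCompl_apply_inr]
      exact ⟨fun h => absurd h hx, fun h => absurd h (f ⟨x, hx⟩).2⟩
  have hσa : σ a ∈ T := (hσ a).1 ha
  refine ⟨σ.trans (Equiv.swap (σ a) i), ?_, ?_⟩
  · intro x
    rw [hσ x]
    simp only [Equiv.trans_apply]
    by_cases h1 : σ x = σ a
    · rw [h1, Equiv.swap_apply_left]; exact ⟨fun _ => hiT, fun _ => hσa⟩
    · by_cases h2 : σ x = i
      · rw [h2, Equiv.swap_apply_right]; exact ⟨fun _ => hσa, fun _ => hiT⟩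
      · rw [Equiv.swap_apply_of_ne_of_ne h1 h2]
  · simp [Equiv.swap_apply_left]

lemma preim_Hyp {N : ℕ} (π : Equiv.Perm (Fin N)) : permCDV π ⁻¹' Hyp N = Hyp N := by
  ext ω
  constructor
  · intro h c hc
    have := h (π.symm c)
    simp only [permCDV, Equiv.apply_symm_apply] at this
    exact this hc
  · intro h b hb
    exact h (π b) hb

lemma preim_Gev {N : ℕ} (π : Equiv.Perm (Fin N)) (a : Fin N) :
    permCDV π ⁻¹' Gev a = Gev (π a) := rfl

lemma preim_Zev {N : ℕ} (π : Equiv.Perm (Fin N)) (C T : Finset (Fin N))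
    (hπ : ∀ x, x ∈ C ↔ π x ∈ T) : permCDV π ⁻¹' Zev C = Zev T := by
  ext ω
  simp only [Set.mem_preimage, Zev, Set.mem_setOf_eq, permCDV]
  constructor
  · intro h c
    have := h (π.symm c)
    rw [Equiv.apply_symm_apply] at this
    rw [this, hπ, Equiv.apply_symm_apply]
  · intro h b
    rw [h (π b), hπ]

lemma Zev_disjoint {N : ℕ} {C C' : Finset (Fin N)} (h : C ≠ C') :
    Disjoint (Zev C) (Zev C') := by
  rw [Set.disjoint_left]
  intro ω h1 h2
  apply h
  ext b
  rw [← h1 b, h2 b]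


/-- for an exchangeable probability measure,
`pr(H | Exact(k,U,F) ∧ F_a ∧ G_a) = pr(H | F_1 ∧ .. ∧ F_k ∧ ¬F_{k+1} ∧ .. ∧ ¬F_N ∧ G_k)`. -/
theorem exact_to_list_FaGa {N k : ℕ} (hk1 : 1 ≤ k) (hk2 : k ≤ N)
    (μ : Measure (CDV N)) [IsProbabilityMeasure μ]
    -- exchangeability: pr(A | B) = pr(A^π | B^π)
    (hexch : ∀ (A B : Set (CDV N)) (π : Equiv.Perm (Fin N)),
      μ[A | B] = μ[permCDV π ⁻¹' A | permCDV π ⁻¹' B])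
    (a : Fin N)
    (D : Set (CDV N)) (hD : D = {ω | ∀ b : Fin N, ((ω b).1 = true ↔ (b : ℕ) < k)})
    (i : Fin N) (hi : (i : ℕ) = k - 1)
    -- the conditioning events have positive probability
    (h1 : μ (ExactEv N k ∩ (Fev a ∩ Gev a)) ≠ 0) (h2 : μ (D ∩ Gev i) ≠ 0) :
    μ[Hyp N | ExactEv N k ∩ (Fev a ∩ Gev a)] = μ[Hyp N | D ∩ Gev i] := by
  classical
  -- the target finset
  set T : Finset (Fin N) := Finset.univ.filter (fun b : Fin N => (b : ℕ) < k) with hT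
  have hTmem : ∀ b : Fin N, b ∈ T ↔ (b : ℕ) < k := by
    intro b; simp [hT]
  have hDZ : D = Zev T := by
    rw [hD]; ext ω; simp only [Zev, Set.mem_setOf_eq, hTmem]
  have hTcard : T.card = k := by
    have : T = Finset.map ⟨Fin.castLE hk2, Fin.castLE_injective hk2⟩ Finset.univ := by
      ext b
      simp only [hTmem, Finset.mem_map, Finset.mem_univ, true_and,
        Function.Embedding.coeFn_mk]
      constructor
      · intro h; exact ⟨⟨(b : ℕ), h⟩, by ext; simp⟩
      · rintro ⟨c, rfl⟩; exact c.2
    rw [this, Finset.card_map, Finset.card_univ, Fintype.card_fin]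
  have hiT : i ∈ T := by
    rw [hTmem, hi]; omega
  -- the index set
  set S : Finset (Finset (Fin N)) :=
    (Finset.univ.powersetCard k).filter (fun C => a ∈ C) with hS
  have hSmem : ∀ C, C ∈ S ↔ C.card = k ∧ a ∈ C := by
    intro C; simp [hS, Finset.mem_powersetCard]
  -- decomposition of the conditioning event
  have hE : ExactEv N k ∩ (Fev a ∩ Gev a) = ⋃ C ∈ S, (Zev C ∩ Gev a) := by
    ext ω
    simp only [ExactEv, Set.mem_inter_iff, Set.mem_iUnion, Finset.mem_powersetCard,
      Fev, Gev, Set.mem_setOf_eq, hSmem, exists_prop]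
    constructor
    · rintro ⟨⟨C, ⟨-, hCk⟩, hωC⟩, hFa, hGa⟩
      exact ⟨C, ⟨hCk, (hωC a).1 hFa⟩, hωC, hGa⟩
    · rintro ⟨C, ⟨hCk, haC⟩, hωC, hGa⟩
      exact ⟨⟨C, ⟨Finset.subset_univ C, hCk⟩, hωC⟩, (hωC a).2 haC, hGa⟩
  -- disjointness
  have hdisj : (↑S : Set (Finset (Fin N))).PairwiseDisjoint
      (fun C => Zev (N := N) C ∩ Gev a) := by
    intro C _ C' _ hne
    exact ((Zev_disjoint hne).mono (Set.inter_subset_left) (Set.inter_subset_left))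
  have hdisj2 : (↑S : Set (Finset (Fin N))).PairwiseDisjoint
      (fun C => Zev (N := N) C ∩ Gev a ∩ Hyp N) := by
    intro C hC C' hC' hne
    exact ((hdisj hC hC' hne).mono (Set.inter_subset_left) (Set.inter_subset_left))
  set c := μ[Hyp N | D ∩ Gev i] with hc
  -- key: each piece contributes proportionally
  have hkey : ∀ C ∈ S, μ ((Zev C ∩ Gev a) ∩ Hyp N) = c * μ (Zev C ∩ Gev a) := by
    intro C hC
    obtain ⟨hCk, haC⟩ := (hSmem C).1 hC
    obtain ⟨π, hπ, hπa⟩ := exists_perm C T (by rw [hCk, hTcard]) a haC i hiT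
    have hcond : μ[Hyp N | Zev C ∩ Gev a] = c := by
      have := hexch (Hyp N) (Zev C ∩ Gev a) π
      rwa [preim_Hyp, Set.preimage_inter, preim_Zev π C T hπ, preim_Gev, hπa,
        ← hDZ] at this
    by_cases h0 : μ (Zev C ∩ Gev a) = 0
    · rw [h0, mul_zero]
      exact measure_mono_null Set.inter_subset_left h0
    · rw [cond_apply (measurable_all _) μ] at hcond
      calc μ ((Zev C ∩ Gev a) ∩ Hyp N)
          = μ (Zev C ∩ Gev a) * ((μ (Zev C ∩ Gev a))⁻¹ * μ ((Zev C ∩ Gev a) ∩ Hyp N)) := by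
            rw [← mul_assoc, ENNReal.mul_inv_cancel h0 (measure_ne_top μ _), one_mul]
        _ = c * μ (Zev C ∩ Gev a) := by rw [hcond, mul_comm]
  -- now compute
  rw [hE] at h1 ⊢
  rw [cond_apply (measurable_all _) μ]
  have hsum : μ (⋃ C ∈ S, (Zev C ∩ Gev a)) = ∑ C ∈ S, μ (Zev C ∩ Gev a) :=
    measure_biUnion_finset hdisj (fun C _ => measurable_all _)
  have hinter : (⋃ C ∈ S, (Zev C ∩ Gev a)) ∩ Hyp N
      = ⋃ C ∈ S, ((Zev C ∩ Gev a) ∩ Hyp N) := by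
    rw [Set.iUnion₂_inter]
  have hsum2 : μ ((⋃ C ∈ S, (Zev C ∩ Gev a)) ∩ Hyp N)
      = c * μ (⋃ C ∈ S, (Zev C ∩ Gev a)) := by
    rw [hinter, measure_biUnion_finset hdisj2 (fun C _ => measurable_all _), hsum,
      Finset.mul_sum]
    exact Finset.sum_congr rfl hkey
  rw [hsum2, ← mul_assoc, mul_right_comm, ENNReal.inv_mul_cancel h1 (measure_ne_top μ _), one_mul]
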